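/- Let α be a multi-index of length k and dimension ≤ n, and let p ∈ [n]. Then u_α(p) = 0 if and only if p = 0 or p is one of the indices in α. Moreover, if p ≠ 0 and p does not belong to α, then u_α(p) = p − #{ i ∈ α : i < p }. -/

import Mathlib

/-- The elementary coface `d_i^{(n+1)} : [n] → [n+1]` (monotonic injection omitting `i`):
`k ↦ k` for `k < i` and `k ↦ k+1` for `k ≥ i`. -/
def dMap (n i : ℕ) : Fin (n + 1) → Fin (n + 2) :=
  fun k => if (k : ℕ) < i then ⟨k, by omega⟩ else ⟨(k : ℕ) + 1, by omega⟩

/-- The elementary quasi-codegeneracy `u_i^{(n)} : [n+1] → [n]`: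
`u_i 0 = u_i i = 0`, `u_i k = k` for `1 ≤ k ≤ i-1`, and `u_i k = k-1` for `k > i`. -/
def uMap (n i : ℕ) : Fin (n + 2) → Fin (n + 1) :=
  fun k => if (k : ℕ) = 0 ∨ (k : ℕ) = i then 0
    else if h : (k : ℕ) < i ∧ (k : ℕ) < n + 1 then ⟨k, h.2⟩
    else ⟨(k : ℕ) - 1, by omega⟩

/-- A function `f : [n] → [m]` is quasi-monotonic if `f 0 = 0` and `f` is strictly
monotonic outside the preimage of `0`. -/
def QuasiMonotonic {n m : ℕ} (f : Fin (n + 1) → Fin (m + 1)) : Prop :=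
  f 0 = 0 ∧ ∀ p q : Fin (n + 1), p < q → f p ≠ 0 → f q ≠ 0 → f p < f q

/-- A multi-index of dimension `≤ n`: a strictly increasing sequence of indices
`i_1 < … < i_k` with `1 ≤ i_p ≤ n` for all `p` (its length is `α.length`). -/
def IsMultiIndex (n : ℕ) (α : List ℕ) : Prop :=
  List.Chain' (· < ·) α ∧ ∀ i ∈ α, 1 ≤ i ∧ i ≤ n

/-- The quasi-codegeneracy `u_α = u_{i_1} ∘ u_{i_2} ∘ ⋯ ∘ u_{i_k} : [n] → [n-k]`
associated to a multi-index `α = (i_1, …, i_k)`; each elementary factor is taken at the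
appropriate dimension (`u_{i_k}` is applied first, at the highest dimension). -/
def uComp (n : ℕ) : (α : List ℕ) → α.length ≤ n → Fin (n + 1) → Fin (n - α.length + 1)
  | [], _ => fun k => k
  | i :: rest, h => fun k =>
      Fin.cast (by simp only [List.length_cons] at h ⊢; omega)
        (uMap (n - rest.length - 1) i
          (Fin.cast (by simp only [List.length_cons] at h; omega)
            (uComp n rest (by simp only [List.length_cons] at h; omega) k)))

/-- The coface `d_α = d_{i_k} ∘ d_{i_{k-1}} ∘ ⋯ ∘ d_{i_1} : [n-k] → [n]`
associated to a multi-index `α = (i_1, …, i_k)`; each elementary factor is taken at the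
appropriate dimension (`d_{i_1}` is applied first, at the lowest dimension). -/
def dComp (n : ℕ) : (α : List ℕ) → α.length ≤ n → Fin (n - α.length + 1) → Fin (n + 1)
  | [], _ => fun k => k
  | i :: rest, h => fun k =>
      dComp n rest (by simp only [List.length_cons] at h; omega)
        (Fin.cast (by simp only [List.length_cons] at h; omega)
          (dMap (n - rest.length - 1) i
            (Fin.cast (by simp only [List.length_cons] at h ⊢; omega) k)))

/-- for a multi-index `α` of dimension `≤ n` and `p ∈ [n]`:
`u_α p = 0` iff `p = 0` or `p ∈ α`; moreover if `p ≠ 0` and `p ∉ α` then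
`u_α p = p - #{i ∈ α | i < p}`. -/
lemma strict_list_len_bound (l : List ℕ) (hl : l.Pairwise (· < ·)) :
    ∀ a b : ℕ, (∀ x ∈ l, a < x ∧ x < b) → l.length ≤ b - a - 1 := by
  induction l with
  | nil => intro a b _; simp
  | cons x xs ih =>
    intro a b h
    rw [List.pairwise_cons] at hl
    have h1 := h x (by simp)
    have h2 : xs.length ≤ b - x - 1 :=
      ih hl.2 x b (fun y hy => ⟨hl.1 y hy, (h y (by simp [hy])).2⟩)
    simp only [List.length_cons]
    omega

theorem uComp_values (n : ℕ) (α : List ℕ) (hmi : IsMultiIndex n α)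
    (hlen : α.length ≤ n) (p : Fin (n + 1)) :
    (uComp n α hlen p = 0 ↔ (p : ℕ) = 0 ∨ (p : ℕ) ∈ α) ∧
    ((p : ℕ) ≠ 0 → (p : ℕ) ∉ α →
      (uComp n α hlen p : ℕ) = (p : ℕ) - (α.filter (fun i => i < (p : ℕ))).length) := by
  induction α with
  | nil =>
    refine ⟨?_, ?_⟩
    · simp [uComp, Fin.ext_iff, -Fin.val_eq_zero_iff]
    · intro _ _; simp [uComp]
  | cons i rest ih =>
    have hpw : (i :: rest).Pairwise (· < ·) := List.isChain_iff_pairwise.mp hmi.1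
    rw [List.pairwise_cons] at hpw
    have hiall : ∀ j ∈ rest, i < j := hpw.1
    have hi1 : 1 ≤ i := (hmi.2 i (by simp)).1
    have hin : i ≤ n := (hmi.2 i (by simp)).2
    have hmr : IsMultiIndex n rest :=
      ⟨List.isChain_iff_pairwise.mpr hpw.2, fun j hj => hmi.2 j (by simp [hj])⟩
    have hrlen : rest.length ≤ n := by
      simp only [List.length_cons] at hlen; omega
    obtain ⟨ih1, ih2⟩ := ih hmr hrlen
    set q : Fin (n - rest.length + 1) := uComp n rest hrlen p with hqdef
    set c : ℕ := (rest.filter (fun j => j < (p : ℕ))).length with hcdef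
    -- filter of rest is strictly increasing with elements > i (if mem rest) etc.
    have hfpw : (rest.filter (fun j => decide (j < (p : ℕ)))).Pairwise (· < ·) :=
      hpw.2.filter _
    have hc2 : i < (p : ℕ) → c ≤ (p : ℕ) - i - 1 := by
      intro _
      refine strict_list_len_bound _ hfpw i (p : ℕ) (fun x hx => ?_)
      have hx1 := List.of_mem_filter hx
      have hx2 := List.mem_of_mem_filter hx
      exact ⟨hiall x hx2, by simpa using hx1⟩
    have hc1 : c ≤ (p : ℕ) - 1 := by
      refine strict_list_len_bound _ hfpw 0 (p : ℕ) (fun x hx => ?_)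
      have hx1 := List.of_mem_filter hx
      have hx2 := List.mem_of_mem_filter hx
      exact ⟨(hmr.2 x hx2).1, by simpa using hx1⟩
    have hc0 : (p : ℕ) ≤ i → c = 0 := by
      intro hpi
      have : rest.filter (fun j => decide (j < (p : ℕ))) = [] := by
        refine List.filter_eq_nil_iff.mpr (fun x hx => ?_)
        have := hiall x hx
        simp only [decide_eq_true_eq]
        omega
      simp [hcdef, this]
    have hibound : i ≤ n - rest.length := by
      have : rest.length ≤ (n + 1) - i - 1 :=
        strict_list_len_bound rest hpw.2 i (n + 1)
          (fun x hx => ⟨hiall x hx, by have := (hmr.2 x hx).2; omega⟩)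
      omega
    -- compute the value of the composite
    have hval : (uComp n (i :: rest) hlen p : ℕ) =
        if (q : ℕ) = 0 ∨ (q : ℕ) = i then 0
        else if (q : ℕ) < i ∧ (q : ℕ) < n - rest.length - 1 + 1 then (q : ℕ)
        else (q : ℕ) - 1 := by
      simp only [uComp, uMap, Fin.coe_cast, ← hqdef]
      split
      · simp
      · split <;> simp
    -- case analysis on p
    by_cases hp0 : (p : ℕ) = 0
    · have hq0 : (q : ℕ) = 0 := by
        have : q = 0 := ih1.mpr (Or.inl hp0)
        simpa [Fin.ext_iff, -Fin.val_eq_zero_iff] using this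
      constructor
      · simp [Fin.ext_iff, Fin.val_zero, hval, hq0, hp0, -Fin.val_eq_zero_iff]
      · intro h; exact absurd hp0 h
    · by_cases hpr : (p : ℕ) ∈ rest
      · have hq0 : (q : ℕ) = 0 := by
          have : q = 0 := ih1.mpr (Or.inr hpr)
          simpa [Fin.ext_iff, -Fin.val_eq_zero_iff] using this
        constructor
        · simp [Fin.ext_iff, Fin.val_zero, hval, hq0, hpr, -Fin.val_eq_zero_iff]
        · intro _ hmem
          exact absurd (by simp [hpr]) hmem
      · have hqval : (q : ℕ) = (p : ℕ) - c := ih2 hp0 hpr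
        have hq0 : (q : ℕ) ≠ 0 := by omega
        have hqi : ((q : ℕ) = i ↔ (p : ℕ) = i) := by
          constructor
          · intro h
            by_contra hne
            rcases Nat.lt_or_ge (p : ℕ) i with hlt | hge
            · have := hc0 (by omega); omega
            · have hip : i < (p : ℕ) := by omega
              have := hc2 hip; omega
          · intro h
            have := hc0 (by omega)
            omega
        have hfilter : ((i :: rest).filter (fun j => j < (p : ℕ))).length =
            (if i < (p : ℕ) then 1 else 0) + c := by
          rcases Nat.lt_or_ge i (p : ℕ) with hip | hip
          · rw [if_pos hip]
            simp [List.filter_cons, hip, hcdef]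
            omega
          · rw [if_neg (Nat.not_lt.mpr hip)]
            simp [List.filter_cons, Nat.not_lt.mpr hip, hcdef]
        constructor
        · rw [Fin.ext_iff, hval]
          simp only [Fin.val_zero, List.mem_cons]
          constructor
          · intro h
            split at h
            · rename_i hcase
              rcases hcase with h' | h'
              · omega
              · exact Or.inr (Or.inl (hqi.mp h'))
            · split at h
              · omega
              · rename_i h1 h2
                exfalso
                rcases Nat.lt_or_ge (p : ℕ) i with hlt | hge
                · have := hc0 (by omega); omega
                · have hip : i < (p : ℕ) := by
                    rcases Nat.lt_or_ge i (p : ℕ) with h' | h'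
                    · exact h'
                    · exfalso; exact h1 (Or.inr (hqi.mpr (by omega)))
                  have := hc2 hip
                  omega
          · intro h
            rcases h with h | h | h
            · omega
            · rw [if_pos (Or.inr (hqi.mpr h))]
            · exact absurd h hpr
        · intro _ hmem
          have hpi : (p : ℕ) ≠ i := by
            intro h; exact hmem (by simp [h])
          rw [hval, hfilter]
          rcases Nat.lt_or_ge (p : ℕ) i with hlt | hge
          · have hc := hc0 (by omega)
            rw [if_neg (show ¬ i < (p : ℕ) by omega),
              if_neg (show ¬ ((q : ℕ) = 0 ∨ (q : ℕ) = i) by omega),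
              if_pos (show (q : ℕ) < i ∧ (q : ℕ) < n - rest.length - 1 + 1 by omega)]
            omega
          · have hip : i < (p : ℕ) := by omega
            have hcc := hc2 hip
            rw [if_pos hip,
              if_neg (show ¬ ((q : ℕ) = 0 ∨ (q : ℕ) = i) by omega),
              if_neg (show ¬ ((q : ℕ) < i ∧ (q : ℕ) < n - rest.length - 1 + 1) by omega)]
            omega
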